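/- Let 𝒜 and ℬ be 2D lattices with rational transition matrix. Define the DSCL 𝒟 as the lattice generated by 𝒜 ∪ ℬ (i.e., the set of all sums a + b with a ∈ 𝒜, b ∈ ℬ). Then 𝒟 is a lattice (discrete full-rank subgroup of ℝ²) containing both 𝒜 and ℬ, and it is the smallest such lattice. -/

import Mathlib

def latt (M : Matrix (Fin 2) (Fin 2) ℝ) : Set (Fin 2 → ℝ) :=
  {v | ∃ z : Fin 2 → ℤ, v = M.mulVec (fun i => (z i : ℝ))}

def IsRatMat (T : Matrix (Fin 2) (Fin 2) ℝ) : Prop :=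
  ∀ i j, ∃ q : ℚ, T i j = (q : ℝ)

private lemma castVec_mulVec' (M : Matrix (Fin 2) (Fin 2) ℤ) (v : Fin 2 → ℤ) :
    (fun i => ((M.mulVec v) i : ℝ)) = (M.map (Int.cast : ℤ → ℝ)).mulVec (fun i => (v i : ℝ)) := by
  ext i
  simp [Matrix.mulVec, dotProduct, Matrix.map_apply]

/-- The DSCL `𝒟 = 𝒜 + ℬ = {a + b : a ∈ 𝒜, b ∈ ℬ}` is a lattice (i.e., of the form
`Dℤ²` for some invertible `D`) containing both `𝒜` and `ℬ`, and it is the smallest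
lattice with this property. -/
theorem dscl_is_smallest_lattice_containing_both
    (A B : Matrix (Fin 2) (Fin 2) ℝ) (hA : IsUnit A.det) (hB : IsUnit B.det)
    (hT : IsRatMat (A⁻¹ * B)) :
    ∃ D : Matrix (Fin 2) (Fin 2) ℝ, IsUnit D.det ∧
      latt D = {x | ∃ a ∈ latt A, ∃ b ∈ latt B, x = a + b} ∧
      latt A ⊆ latt D ∧ latt B ⊆ latt D ∧
      ∀ L : Matrix (Fin 2) (Fin 2) ℝ, IsUnit L.det →
        latt A ⊆ latt L → latt B ⊆ latt L → latt D ⊆ latt L := by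
  classical
  have hT' : ∀ i j, ∃ q : ℚ, (A⁻¹ * B) i j = (q : ℝ) := hT
  choose q hq using hT'
  -- common denominator
  set n : ℤ := ∏ i : Fin 2, ∏ j : Fin 2, ((q i j).den : ℤ) with hn
  have hnpos : 0 < n := by
    apply Finset.prod_pos; intro i _; apply Finset.prod_pos; intro j _
    exact_mod_cast (q i j).pos
  have hn0 : (n : ℝ) ≠ 0 := by exact_mod_cast hnpos.ne'
  have hden : ∀ i j, ((q i j).den : ℤ) ∣ n := by
    intro i j
    exact dvd_trans (Finset.dvd_prod_of_mem (fun j => ((q i j).den : ℤ)) (Finset.mem_univ j))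
      (Finset.dvd_prod_of_mem (fun i => ∏ j : Fin 2, ((q i j).den : ℤ)) (Finset.mem_univ i))
  -- integer numerator matrix
  set N : Matrix (Fin 2) (Fin 2) ℤ :=
    Matrix.of (fun i j => (q i j).num * (n / ((q i j).den : ℤ))) with hN
  have hNq : ∀ i j, (N i j : ℚ) = q i j * (n : ℚ) := by
    intro i j
    obtain ⟨c, hc⟩ := hden i j
    have hd0 : ((q i j).den : ℤ) ≠ 0 := by exact_mod_cast (q i j).den_nz
    have hd0q : ((q i j).den : ℚ) ≠ 0 := by exact_mod_cast (q i j).den_nz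
    have key : q i j * ((q i j).den : ℚ) = ((q i j).num : ℚ) :=
      ((div_eq_iff hd0q).mp (Rat.num_div_den (q i j))).symm
    show (((q i j).num * (n / ((q i j).den : ℤ)) : ℤ) : ℚ) = _
    rw [hc, Int.mul_ediv_cancel_left _ hd0]
    push_cast
    rw [← key]; push_cast [hc]; ring
  set Nr : Matrix (Fin 2) (Fin 2) ℝ := N.map (Int.cast : ℤ → ℝ) with hNr
  have hTN : A⁻¹ * B = (n : ℝ)⁻¹ • Nr := by
    ext i j
    have h1 : ((N i j : ℚ) : ℝ) = ((q i j : ℚ) : ℝ) * ((n : ℚ) : ℝ) := by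
      rw [hNq i j]; push_cast; ring
    simp only [Matrix.smul_apply, Matrix.map_apply, smul_eq_mul, hNr, hq i j]
    push_cast at h1 ⊢
    rw [h1]; field_simp
  -- the subgroup nℤ² + Nℤ² of ℤ²
  set G : Submodule ℤ (Fin 2 → ℤ) :=
    LinearMap.range ((n : ℤ) • (LinearMap.id : (Fin 2 → ℤ) →ₗ[ℤ] (Fin 2 → ℤ))) ⊔
      LinearMap.range (Matrix.mulVecLin N) with hG
  have hGmem : ∀ x : Fin 2 → ℤ, x ∈ G ↔ ∃ z w : Fin 2 → ℤ, x = n • z + N.mulVec w := by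
    intro x
    rw [hG, Submodule.mem_sup]
    constructor
    · rintro ⟨y, ⟨z, rfl⟩, w, ⟨u, rfl⟩, rfl⟩
      exact ⟨z, u, by simp [Matrix.mulVecLin]⟩
    · rintro ⟨z, w, rfl⟩
      exact ⟨n • z, ⟨z, by simp⟩, N.mulVec w, ⟨w, by simp [Matrix.mulVecLin]⟩, rfl⟩
  -- G is free of rank 2
  obtain ⟨k, bG⟩ := Submodule.basisOfPid (Pi.basisFun ℤ (Fin 2)) G
  have finG : Module.Finite ℤ G := Module.Finite.of_basis bG
  have hk : k = 2 := by
    have h1 : Module.finrank ℤ G = k := by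
      rw [Module.finrank_eq_card_basis bG, Fintype.card_fin]
    have h2 : Module.finrank ℤ G ≤ 2 := by
      have := G.finrank_le
      rwa [Module.finrank_pi ℤ, Fintype.card_fin] at this
    have h3 : 2 ≤ Module.finrank ℤ G := by
      set u : Fin 2 → (Fin 2 → ℤ) := fun i => n • Pi.single i 1 with hu
      have humem : ∀ i, u i ∈ G := by
        intro i
        rw [hGmem]
        exact ⟨Pi.single i 1, 0, by simp [hu]⟩
      have hindep : LinearIndependent ℤ u := by
        rw [Fintype.linearIndependent_iff]
        intro g hg i
        have := congrFun hg i
        simp [hu, Pi.single_apply, Finset.sum_ite_eq', smul_smul] at this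
        rcases this with h | h
        · exact h
        · exact absurd h hnpos.ne'
      set v : Fin 2 → G := fun i => ⟨u i, humem i⟩ with hv
      have hvindep : LinearIndependent ℤ v := by
        apply LinearIndependent.of_comp G.subtype
        convert hindep
        rfl
      have := hvindep.fintype_card_le_finrank
      simpa using this
    omega
  subst hk
  -- the matrix S whose columns are the basis of G
  set S : Matrix (Fin 2) (Fin 2) ℤ := Matrix.of (fun i j => (bG j : Fin 2 → ℤ) i) with hS
  have hSmul : ∀ z : Fin 2 → ℤ, S.mulVec z = ((∑ j, z j • bG j : G) : Fin 2 → ℤ) := by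
    intro z
    ext i
    simp only [Matrix.mulVec, dotProduct, hS, Matrix.of_apply]
    rw [show (((∑ j, z j • bG j : G) : Fin 2 → ℤ) i) = ∑ j, z j * (bG j : Fin 2 → ℤ) i by
      simp [Submodule.coe_sum]]
    exact Finset.sum_congr rfl fun j _ => mul_comm _ _
  have hGSmem : ∀ x : Fin 2 → ℤ, x ∈ G ↔ ∃ z, x = S.mulVec z := by
    intro x
    constructor
    · intro hx
      refine ⟨fun j => bG.repr ⟨x, hx⟩ j, ?_⟩
      rw [hSmul]
      rw [bG.sum_repr ⟨x, hx⟩]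
    · rintro ⟨z, rfl⟩
      rw [hSmul]
      exact (∑ j, z j • bG j : G).2
  have hGS : ∀ x : Fin 2 → ℤ,
      (∃ z w : Fin 2 → ℤ, x = n • z + N.mulVec w) ↔ ∃ z, x = S.mulVec z := by
    intro x
    rw [← hGmem, hGSmem]
  have hSdet : S.det ≠ 0 := by
    intro h
    obtain ⟨v, hv0, hv⟩ := Matrix.exists_mulVec_eq_zero_iff.mpr h
    have hsum : (∑ j, v j • bG j : G) = 0 := by
      apply Subtype.ext
      rw [← hSmul, hv]
      rfl
    have := Fintype.linearIndependent_iff.mp bG.linearIndependent v hsum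
    exact hv0 (funext this)
  -- now pass to ℝ
  set Sr : Matrix (Fin 2) (Fin 2) ℝ := S.map (Int.cast : ℤ → ℝ) with hSr
  have hABN : B = A * ((n : ℝ)⁻¹ • Nr) := by
    rw [← hTN, ← Matrix.mul_assoc, Matrix.mul_nonsing_inv A hA, Matrix.one_mul]
  set D : Matrix (Fin 2) (Fin 2) ℝ := (n : ℝ)⁻¹ • (A * Sr) with hD
  have hDdet : IsUnit D.det := by
    rw [hD, Matrix.det_smul, Matrix.det_mul]
    have hSr0 : Sr.det ≠ 0 := by
      have hcast : ((S.det : ℤ) : ℝ) = Sr.det := by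
        rw [hSr]; simpa using RingHom.map_det (Int.castRingHom ℝ) S
      rw [← hcast]
      exact_mod_cast hSdet
    exact isUnit_iff_ne_zero.mpr
      (mul_ne_zero (pow_ne_zero _ (inv_ne_zero hn0)) (mul_ne_zero hA.ne_zero hSr0))
  have hBmul : ∀ w : Fin 2 → ℤ, B.mulVec (fun i => (w i : ℝ)) =
      (n : ℝ)⁻¹ • A.mulVec (fun i => ((N.mulVec w) i : ℝ)) := by
    intro w
    rw [castVec_mulVec', hABN, ← Matrix.mulVec_mulVec, Matrix.smul_mulVec,
      Matrix.mulVec_smul]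
  have hAmul : ∀ z : Fin 2 → ℤ, A.mulVec (fun i => (z i : ℝ)) =
      (n : ℝ)⁻¹ • A.mulVec (fun i => ((n • z) i : ℝ)) := by
    intro z
    have : (fun i => ((n • z) i : ℝ)) = (n : ℝ) • (fun i => (z i : ℝ)) := by
      ext i; simp only [Pi.smul_apply, smul_eq_mul]; push_cast; ring
    rw [this, Matrix.mulVec_smul, smul_smul, inv_mul_cancel₀ hn0, one_smul]
  have hDmul : ∀ u : Fin 2 → ℤ, D.mulVec (fun i => (u i : ℝ)) =
      (n : ℝ)⁻¹ • A.mulVec (fun i => ((S.mulVec u) i : ℝ)) := by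
    intro u
    rw [castVec_mulVec', hD, Matrix.smul_mulVec, ← Matrix.mulVec_mulVec]
  have hsetEq : latt D = {x | ∃ a ∈ latt A, ∃ b ∈ latt B, x = a + b} := by
    ext v
    constructor
    · rintro ⟨z, rfl⟩
      obtain ⟨w, u, hwu⟩ := (hGS (S.mulVec z)).mpr ⟨z, rfl⟩
      refine ⟨A.mulVec (fun i => ((w i : ℝ))), ⟨w, rfl⟩,
        B.mulVec (fun i => ((u i : ℝ))), ⟨u, rfl⟩, ?_⟩
      rw [hDmul, hwu, hBmul, hAmul w]
      have : (fun i => (((n • w + N.mulVec u) i : ℤ) : ℝ)) =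
          (fun i => (((n • w) i : ℤ) : ℝ)) + (fun i => (((N.mulVec u) i : ℤ) : ℝ)) := by
        ext i; simp only [Pi.add_apply, Int.cast_add]
      rw [this, Matrix.mulVec_add, smul_add]
    · rintro ⟨a, ⟨z, rfl⟩, b, ⟨w, rfl⟩, rfl⟩
      obtain ⟨u, hu⟩ := (hGS (n • z + N.mulVec w)).mp ⟨z, w, rfl⟩
      refine ⟨u, ?_⟩
      rw [hDmul, ← hu, hBmul, hAmul z]
      have : (fun i => (((n • z + N.mulVec w) i : ℤ) : ℝ)) =
          (fun i => (((n • z) i : ℤ) : ℝ)) + (fun i => (((N.mulVec w) i : ℤ) : ℝ)) := by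
        ext i; simp only [Pi.add_apply, Int.cast_add]
      rw [this, Matrix.mulVec_add, smul_add]
  have hzero : ∀ M : Matrix (Fin 2) (Fin 2) ℝ, (0 : Fin 2 → ℝ) ∈ latt M := by
    intro M
    refine ⟨0, funext fun i => ?_⟩
    simp [Matrix.mulVec, dotProduct]
  refine ⟨D, hDdet, hsetEq, ?_, ?_, ?_⟩
  · intro a ha
    rw [hsetEq]
    exact ⟨a, ha, 0, hzero B, (add_zero a).symm⟩
  · intro b hb
    rw [hsetEq]
    exact ⟨0, hzero A, b, hb, (zero_add b).symm⟩
  · intro L _ hAL hBL v hv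
    rw [hsetEq] at hv
    obtain ⟨a, ha, b, hb, rfl⟩ := hv
    obtain ⟨z1, rfl⟩ := hAL ha
    obtain ⟨z2, rfl⟩ := hBL hb
    refine ⟨z1 + z2, ?_⟩
    have : (fun i => (((z1 + z2) i : ℤ) : ℝ)) =
        (fun i => ((z1 i : ℤ) : ℝ)) + (fun i => ((z2 i : ℤ) : ℝ)) := by
      ext i; simp only [Pi.add_apply, Int.cast_add]
    rw [this, Matrix.mulVec_add]
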